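/- Let G be a countably infinite cancellative semigroup, let (F_n) be a Følner sequence in G, let A ⊆ G and let g ∈ G. Then the following are equivalent: (i) gA = {g·a : a ∈ A} is (F_n)-normal; (ii) A is (F_n)-normal; (iii) g⁻¹A = {h ∈ G : g·h ∈ A} is (F_n)-normal. -/
import Mathlib


open Filter

/- `(F n)` is a (left) Følner sequence in the semigroup `G`. -/
open scoped Classical in
def IsFolner {G : Type*} [Mul G] (F : ℕ → Finset G) : Prop :=
  (∀ n, (F n).Nonempty) ∧
  ∀ g : G, Tendsto
    (fun n => (((F n).filter (fun h => g * h ∈ F n)).card : ℝ) / (F n).card)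
    atTop (nhds 1)

/- `A ⊆ G` is `(F n)`-normal: for every nonempty finite `K ⊆ G` and block
`B : K → {0,1}`, `(1/|F n|) |{g ∈ F n : ∀ h ∈ K, 1_A (h g) = B h}| → 2^{-|K|}`. -/
open scoped Classical in
def IsNormalSet {G : Type*} [Mul G] (F : ℕ → Finset G) (A : Set G) : Prop :=
  ∀ K : Finset G, K.Nonempty → ∀ B : G → Bool,
    Tendsto
      (fun n =>
        (((F n).filter (fun g => ∀ h ∈ K, (h * g ∈ A ↔ B h = true))).card : ℝ) / (F n).card)
      atTop (nhds ((1 / 2 : ℝ) ^ K.card))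

section Aux

open scoped Classical

variable {G : Type*} [Semigroup G] [IsCancelMul G]

set_option linter.unusedSectionVars false

/-- Counting inequalities from the Følner condition: replacing `P x` by `P (g x)`
changes the count over `F n` by at most `|F n| - |F n ∩ g⁻¹ F n|`. -/
lemma folner_key_nat (F : ℕ → Finset G) (g : G) (P : G → Prop)
    [DecidablePred P] [DecidablePred fun x => P (g * x)] (n : ℕ) :
    ((F n).filter (fun x => P (g * x))).card ≤ ((F n).filter P).card +
      ((F n).card - ((F n).filter (fun h => g * h ∈ F n)).card) ∧
    ((F n).filter P).card ≤ ((F n).filter (fun x => P (g * x))).card +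
      ((F n).card - ((F n).filter (fun h => g * h ∈ F n)).card) := by
  set E := (F n).filter (fun h => g * h ∈ F n) with hE
  have hinj : Function.Injective (fun x : G => g * x) := fun a b h => mul_left_cancel h
  have hEsub : E ⊆ F n := Finset.filter_subset _ _
  have himgsub : E.image (fun x => g * x) ⊆ F n := by
    intro y hy
    simp only [Finset.mem_image] at hy
    obtain ⟨x, hx, rfl⟩ := hy
    exact (Finset.mem_filter.mp hx).2
  constructor
  · have h1 : (F n).filter (fun x => P (g * x)) ⊆
        (E.filter (fun x => P (g * x))) ∪ ((F n) \ E) := by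
      intro x hx
      rw [Finset.mem_filter] at hx
      by_cases hxE : x ∈ E
      · exact Finset.mem_union_left _ (Finset.mem_filter.mpr ⟨hxE, hx.2⟩)
      · exact Finset.mem_union_right _ (Finset.mem_sdiff.mpr ⟨hx.1, hxE⟩)
    have h2 : (E.filter (fun x => P (g * x))).card ≤ ((F n).filter P).card := by
      have himg : (E.filter (fun x => P (g * x))).image (fun x => g * x) ⊆ (F n).filter P := by
        intro y hy
        simp only [Finset.mem_image, Finset.mem_filter] at hy
        obtain ⟨x, ⟨hxE, hx3⟩, rfl⟩ := hy
        exact Finset.mem_filter.mpr ⟨(Finset.mem_filter.mp hxE).2, hx3⟩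
      calc (E.filter (fun x => P (g * x))).card
          = ((E.filter (fun x => P (g * x))).image (fun x => g * x)).card :=
            (Finset.card_image_of_injective _ hinj).symm
        _ ≤ ((F n).filter P).card := Finset.card_le_card himg
    calc ((F n).filter (fun x => P (g * x))).card
        ≤ ((E.filter (fun x => P (g * x))) ∪ ((F n) \ E)).card := Finset.card_le_card h1
      _ ≤ (E.filter (fun x => P (g * x))).card + ((F n) \ E).card := Finset.card_union_le _ _
      _ ≤ ((F n).filter P).card + ((F n).card - E.card) := by
          rw [Finset.card_sdiff_of_subset hEsub]; exact Nat.add_le_add h2 le_rfl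
  · have h1 : (F n).filter P ⊆
        ((E.filter (fun x => P (g * x))).image (fun x => g * x)) ∪
          ((F n) \ (E.image (fun x => g * x))) := by
      intro y hy
      rw [Finset.mem_filter] at hy
      by_cases hyI : y ∈ E.image (fun x => g * x)
      · simp only [Finset.mem_image] at hyI
        obtain ⟨x, hx, rfl⟩ := hyI
        refine Finset.mem_union_left _ ?_
        exact Finset.mem_image_of_mem _ (Finset.mem_filter.mpr ⟨hx, hy.2⟩)
      · exact Finset.mem_union_right _ (Finset.mem_sdiff.mpr ⟨hy.1, hyI⟩)
    have h2 : (E.filter (fun x => P (g * x))).card ≤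
        ((F n).filter (fun x => P (g * x))).card :=
      Finset.card_le_card (Finset.filter_subset_filter _ hEsub)
    calc ((F n).filter P).card
        ≤ ((E.filter (fun x => P (g * x))).image (fun x => g * x)).card +
            ((F n) \ (E.image (fun x => g * x))).card :=
          (Finset.card_le_card h1).trans (Finset.card_union_le _ _)
      _ = (E.filter (fun x => P (g * x))).card + ((F n).card - E.card) := by
          rw [Finset.card_image_of_injective _ hinj, Finset.card_sdiff_of_subset himgsub,
            Finset.card_image_of_injective _ hinj]
      _ ≤ ((F n).filter (fun x => P (g * x))).card + ((F n).card - E.card) :=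
          Nat.add_le_add h2 le_rfl

lemma folner_diff_tendsto (F : ℕ → Finset G)
    (hne : ∀ n, (F n).Nonempty)
    (hfol : ∀ g : G, Tendsto
      (fun n => (((F n).filter (fun h => g * h ∈ F n)).card : ℝ) / (F n).card)
      atTop (nhds 1)) (g : G) (P : G → Prop)
    [DecidablePred P] [DecidablePred fun x => P (g * x)] :
    Tendsto (fun n => (((F n).filter (fun x => P (g * x))).card : ℝ) / (F n).card -
      (((F n).filter P).card : ℝ) / (F n).card) atTop (nhds 0) := by
  have hpos : ∀ n, (0 : ℝ) < (F n).card := fun n => by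
    exact_mod_cast Finset.card_pos.mpr (hne n)
  have hb : Tendsto (fun n => 1 - (((F n).filter (fun h => g * h ∈ F n)).card : ℝ) / (F n).card)
      atTop (nhds 0) := by
    have := (hfol g).const_sub 1
    simpa using this
  refine squeeze_zero_norm (fun n => ?_) hb
  have h := folner_key_nat F g P n
  have hEle' : ((F n).filter (fun h => g * h ∈ F n)).card ≤ (F n).card :=
    Finset.card_le_card (Finset.filter_subset _ _)
  have h1 : (((F n).filter (fun x => P (g * x))).card : ℝ) ≤ ((F n).filter P).card +
      (((F n).card : ℝ) - ((F n).filter (fun h => g * h ∈ F n)).card) := by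
    have := h.1
    rw [← Nat.cast_sub hEle', ← Nat.cast_add]
    exact_mod_cast this
  have h2 : (((F n).filter P).card : ℝ) ≤ ((F n).filter (fun x => P (g * x))).card +
      (((F n).card : ℝ) - ((F n).filter (fun h => g * h ∈ F n)).card) := by
    have := h.2
    rw [← Nat.cast_sub hEle', ← Nat.cast_add]
    exact_mod_cast this
  have habs : |(((F n).filter (fun x => P (g * x))).card : ℝ) - ((F n).filter P).card| ≤
      ((F n).card : ℝ) - ((F n).filter (fun h => g * h ∈ F n)).card := by
    rw [abs_sub_le_iff]; constructor <;> linarith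
  rw [div_sub_div_same, Real.norm_eq_abs, abs_div, abs_of_pos (hpos n)]
  exact ((div_le_div_iff_of_pos_right (hpos n)).mpr habs).trans_eq
    (by rw [sub_div, div_self (ne_of_gt (hpos n))])

lemma folner_shiftA (F : ℕ → Finset G)
    (hne : ∀ n, (F n).Nonempty)
    (hfol : ∀ g : G, Tendsto
      (fun n => (((F n).filter (fun h => g * h ∈ F n)).card : ℝ) / (F n).card)
      atTop (nhds 1)) (g : G) (P : G → Prop)
    [DecidablePred P] [DecidablePred fun x => P (g * x)] (L : ℝ)
    (h : Tendsto (fun n => (((F n).filter (fun x => P (g * x))).card : ℝ) / (F n).card)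
      atTop (nhds L)) :
    Tendsto (fun n => (((F n).filter P).card : ℝ) / (F n).card) atTop (nhds L) := by
  have := h.sub (folner_diff_tendsto F hne hfol g P)
  simpa using this

lemma folner_shiftB (F : ℕ → Finset G)
    (hne : ∀ n, (F n).Nonempty)
    (hfol : ∀ g : G, Tendsto
      (fun n => (((F n).filter (fun h => g * h ∈ F n)).card : ℝ) / (F n).card)
      atTop (nhds 1)) (g : G) (P : G → Prop)
    [DecidablePred P] [DecidablePred fun x => P (g * x)] (L : ℝ)
    (h : Tendsto (fun n => (((F n).filter P).card : ℝ) / (F n).card) atTop (nhds L)) :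
    Tendsto (fun n => (((F n).filter (fun x => P (g * x))).card : ℝ) / (F n).card)
      atTop (nhds L) := by
  have := (folner_diff_tendsto F hne hfol g P).add h
  simpa using this

lemma folner_inter_tendsto_one (F : ℕ → Finset G) (hne : ∀ n, (F n).Nonempty)
    (K : Finset G) (P : G → G → Prop)
    (h : ∀ k ∈ K, Tendsto (fun n => (((F n).filter (P k)).card : ℝ) / (F n).card)
      atTop (nhds 1)) :
    Tendsto (fun n => (((F n).filter (fun x => ∀ k ∈ K, P k x)).card : ℝ) / (F n).card)
      atTop (nhds 1) := by
  have hpos : ∀ n, (0 : ℝ) < (F n).card := fun n => by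
    exact_mod_cast Finset.card_pos.mpr (hne n)
  induction K using Finset.induction_on with
  | empty =>
    have : ∀ n, ((F n).filter (fun x => ∀ k ∈ (∅ : Finset G), P k x)) = F n := by
      intro n; apply Finset.filter_true_of_mem; intro x _; simp
    simp only [this]
    refine tendsto_const_nhds.congr fun n => ?_
    rw [div_self (ne_of_gt (hpos n))]
  | @insert a s ha ih =>
    have hPa := h a (Finset.mem_insert_self a s)
    have hrest := ih (fun k hk => h k (Finset.mem_insert_of_mem hk))
    have hlow : ∀ n, (((F n).filter (P a)).card : ℝ) / (F n).card +
        (((F n).filter (fun x => ∀ k ∈ s, P k x)).card : ℝ) / (F n).card - 1 ≤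
        (((F n).filter (fun x => ∀ k ∈ insert a s, P k x)).card : ℝ) / (F n).card := by
      intro n
      have hcap : ((F n).filter (P a)) ∩ ((F n).filter (fun x => ∀ k ∈ s, P k x)) =
          (F n).filter (fun x => ∀ k ∈ insert a s, P k x) := by
        ext x
        simp only [Finset.mem_inter, Finset.mem_filter, Finset.mem_insert]
        constructor
        · rintro ⟨⟨hx, hpa⟩, ⟨-, hs⟩⟩
          exact ⟨hx, fun k hk => hk.elim (fun e => e ▸ hpa) (hs k)⟩
        · rintro ⟨hx, hall⟩
          exact ⟨⟨hx, hall a (Or.inl rfl)⟩, ⟨hx, fun k hk => hall k (Or.inr hk)⟩⟩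
      have hcardle : ((F n).filter (P a)).card +
          ((F n).filter (fun x => ∀ k ∈ s, P k x)).card ≤
          ((F n).filter (fun x => ∀ k ∈ insert a s, P k x)).card + (F n).card := by
        rw [← hcap]
        have h1 := Finset.card_inter_add_card_union ((F n).filter (P a))
          ((F n).filter (fun x => ∀ k ∈ s, P k x))
        have hun : (((F n).filter (P a)) ∪ ((F n).filter (fun x => ∀ k ∈ s, P k x))).card ≤
            (F n).card := Finset.card_le_card (by
              intro x hx
              rcases Finset.mem_union.mp hx with hx | hx <;>
                exact (Finset.mem_filter.mp hx).1)
        omega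
      have hcast : (((F n).filter (P a)).card : ℝ) +
          ((F n).filter (fun x => ∀ k ∈ s, P k x)).card ≤
          ((F n).filter (fun x => ∀ k ∈ insert a s, P k x)).card + (F n).card := by
        exact_mod_cast hcardle
      have heq : (((F n).filter (P a)).card : ℝ) / (F n).card +
          (((F n).filter (fun x => ∀ k ∈ s, P k x)).card : ℝ) / (F n).card - 1 =
          ((((F n).filter (P a)).card : ℝ) +
            (((F n).filter (fun x => ∀ k ∈ s, P k x)).card : ℝ) - (F n).card) / (F n).card := by
        field_simp
      rw [heq]
      exact (div_le_div_iff_of_pos_right (hpos n)).mpr (by linarith)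
    have hup : ∀ n, (((F n).filter (fun x => ∀ k ∈ insert a s, P k x)).card : ℝ) / (F n).card
        ≤ 1 := by
      intro n
      rw [div_le_one (hpos n)]
      exact_mod_cast Finset.card_le_card (Finset.filter_subset _ _)
    have hlowt : Tendsto (fun n => (((F n).filter (P a)).card : ℝ) / (F n).card +
        (((F n).filter (fun x => ∀ k ∈ s, P k x)).card : ℝ) / (F n).card - 1)
        atTop (nhds 1) := by
      have := (hPa.add hrest).sub_const 1
      norm_num at this
      exact this
    exact tendsto_of_tendsto_of_tendsto_of_le_of_le hlowt tendsto_const_nhds hlow hup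

lemma folner_exists_t (F : ℕ → Finset G) (hne : ∀ n, (F n).Nonempty)
    (hfol : ∀ g : G, Tendsto
      (fun n => (((F n).filter (fun h => g * h ∈ F n)).card : ℝ) / (F n).card)
      atTop (nhds 1)) (g : G) (K : Finset G) :
    ∃ t : G, ∀ k ∈ K, ∃ y : G, k * t = g * y := by
  have hpos : ∀ n, (0 : ℝ) < (F n).card := fun n => by
    exact_mod_cast Finset.card_pos.mpr (hne n)
  have hgG : Tendsto (fun n => (((F n).filter (fun x => ∃ y, x = g * y)).card : ℝ) / (F n).card)
      atTop (nhds 1) := by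
    apply folner_shiftA F hne hfol g
    have : ∀ n, ((F n).filter (fun x => ∃ y, g * x = g * y)) = F n := by
      intro n; apply Finset.filter_true_of_mem; intro x _; exact ⟨x, rfl⟩
    simp only [this]
    refine tendsto_const_nhds.congr fun n => ?_
    rw [div_self (ne_of_gt (hpos n))]
  have hk : ∀ k ∈ K, Tendsto
      (fun n => (((F n).filter (fun x => ∃ y, k * x = g * y)).card : ℝ) / (F n).card)
      atTop (nhds 1) := by
    intro k _
    exact folner_shiftB F hne hfol k (fun x => ∃ y, x = g * y) 1 hgG
  have hall := folner_inter_tendsto_one F hne K (fun k x => ∃ y, k * x = g * y) hk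
  have hev : ∀ᶠ n in atTop,
      (1/2 : ℝ) < (((F n).filter (fun x => ∀ k ∈ K, ∃ y, k * x = g * y)).card : ℝ) / (F n).card :=
    hall.eventually (lt_mem_nhds (by norm_num : (1/2 : ℝ) < 1))
  obtain ⟨n, hn⟩ := hev.exists
  have : ((F n).filter (fun x => ∀ k ∈ K, ∃ y, k * x = g * y)).Nonempty := by
    rw [Finset.nonempty_iff_ne_empty]
    intro hemp
    rw [hemp] at hn
    simp at hn
    linarith
  obtain ⟨t, ht⟩ := this
  exact ⟨t, (Finset.mem_filter.mp ht).2⟩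

lemma folner_core (F : ℕ → Finset G) (hne : ∀ n, (F n).Nonempty)
    (hfol : ∀ g : G, Tendsto
      (fun n => (((F n).filter (fun h => g * h ∈ F n)).card : ℝ) / (F n).card)
      atTop (nhds 1)) (A : Set G) (g : G) :
    IsNormalSet F A ↔ IsNormalSet F {h : G | g * h ∈ A} := by
  have hinj : Function.Injective (fun x : G => g * x) := fun a b h => mul_left_cancel h
  constructor
  · intro hA K hK B
    set K' := K.image (fun h => g * h) with hK'
    set B' : G → Bool := fun x => decide (∃ h ∈ K, g * h = x ∧ B h = true) with hB'
    have hB'eq : ∀ h ∈ K, B' (g * h) = B h := by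
      intro h hh
      cases hb : B h with
      | false =>
        simp only [hB', decide_eq_false_iff_not]
        rintro ⟨h', hh', he, hbh'⟩
        rw [hinj he, hb] at hbh'
        exact Bool.false_ne_true hbh'
      | true =>
        simp only [hB', decide_eq_true_eq]
        exact ⟨h, hh, rfl, hb⟩
    have hKcard : K'.card = K.card := Finset.card_image_of_injective _ hinj
    have hthis := hA K' (hK.image _) B'
    rw [hKcard] at hthis
    refine hthis.congr fun n => ?_
    have hset : (F n).filter (fun x => ∀ h ∈ K', (h * x ∈ A ↔ B' h = true)) =
        (F n).filter (fun x => ∀ h ∈ K, (h * x ∈ {h : G | g * h ∈ A} ↔ B h = true)) := by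
      apply Finset.filter_congr
      intro x _
      constructor
      · intro hall h hh
        have h1 := hall (g * h) (Finset.mem_image_of_mem _ hh)
        rw [hB'eq h hh] at h1
        rw [Set.mem_setOf_eq, ← mul_assoc]
        exact h1
      · intro hall h' hh'
        obtain ⟨h, hh, rfl⟩ := Finset.mem_image.mp hh'
        have h1 := hall h hh
        rw [Set.mem_setOf_eq, ← mul_assoc] at h1
        rw [hB'eq h hh]
        exact h1
    congr 1
    exact_mod_cast congrArg Finset.card hset
  · intro hA' K hK B
    obtain ⟨t, ht⟩ := folner_exists_t F hne hfol g K
    set ψ : G → G := fun k => if h : ∃ y, k * t = g * y then h.choose else k with hψdef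
    have hψ : ∀ k ∈ K, g * ψ k = k * t := by
      intro k hk
      have h : ∃ y, k * t = g * y := ht k hk
      simp only [hψdef, dif_pos h]
      exact h.choose_spec.symm
    have hψinj : Set.InjOn ψ K := by
      intro a ha b hb hab
      have : a * t = b * t := by rw [← hψ a ha, ← hψ b hb, hab]
      exact mul_right_cancel this
    set K₀ := K.image ψ with hK₀
    have hK₀card : K₀.card = K.card := Finset.card_image_of_injOn hψinj
    set B₀ : G → Bool := fun x => decide (∃ k ∈ K, ψ k = x ∧ B k = true) with hB₀
    have hB₀eq : ∀ k ∈ K, B₀ (ψ k) = B k := by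
      intro k hk
      cases hb : B k with
      | false =>
        simp only [hB₀, decide_eq_false_iff_not]
        rintro ⟨k', hk', he, hbk'⟩
        rw [hψinj hk' hk he, hb] at hbk'
        exact Bool.false_ne_true hbk'
      | true =>
        simp only [hB₀, decide_eq_true_eq]
        exact ⟨k, hk, rfl, hb⟩
    have hthis := hA' K₀ (hK.image _) B₀
    rw [hK₀card] at hthis
    have hres : Tendsto (fun n =>
        (((F n).filter (fun x => (fun z => ∀ k ∈ K, (k * z ∈ A ↔ B k = true)) (t * x))).card : ℝ) /
          (F n).card) atTop (nhds ((1 / 2 : ℝ) ^ K.card)) := by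
      refine hthis.congr fun n => ?_
      have hset : (F n).filter (fun x => ∀ h ∈ K₀, (h * x ∈ {h : G | g * h ∈ A} ↔ B₀ h = true)) =
          (F n).filter (fun x => (fun z => ∀ k ∈ K, (k * z ∈ A ↔ B k = true)) (t * x)) := by
        apply Finset.filter_congr
        intro x _
        constructor
        · intro hall k hk
          have h1 := hall (ψ k) (Finset.mem_image_of_mem _ hk)
          rw [hB₀eq k hk, Set.mem_setOf_eq, ← mul_assoc, hψ k hk, mul_assoc] at h1
          exact h1
        · intro hall h' hh'
          obtain ⟨k, hk, rfl⟩ := Finset.mem_image.mp hh'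
          have h1 := hall k hk
          rw [hB₀eq k hk, Set.mem_setOf_eq, ← mul_assoc, hψ k hk, mul_assoc]
          exact h1
      congr 1
      exact_mod_cast congrArg Finset.card hset
    exact folner_shiftA F hne hfol t (fun z => ∀ k ∈ K, (k * z ∈ A ↔ B k = true))
      ((1 / 2 : ℝ) ^ K.card) hres

end Aux

/-- Left invariance of `(F n)`-normality in a countably infinite cancellative
semigroup: `g A` is `(F n)`-normal iff `A` is `(F n)`-normal iff `g⁻¹ A` is
`(F n)`-normal, where `g A = {g a : a ∈ A}` and `g⁻¹ A = {h : g h ∈ A}`. -/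
theorem normal_left_invariance
    {G : Type*} [Semigroup G] [IsCancelMul G] [Countable G] [Infinite G]
    (F : ℕ → Finset G) (hF : IsFolner F) (A : Set G) (g : G) :
    (IsNormalSet F ((fun a => g * a) '' A) ↔ IsNormalSet F A) ∧
    (IsNormalSet F A ↔ IsNormalSet F {h : G | g * h ∈ A}) := by
  obtain ⟨hne, hfol⟩ := hF
  constructor
  · have h := folner_core F hne hfol ((fun a => g * a) '' A) g
    have heq : {h : G | g * h ∈ (fun a => g * a) '' A} = A := by
      ext x
      simp only [Set.mem_setOf_eq, Set.mem_image]
      constructor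
      · rintro ⟨a, ha, hax⟩
        rwa [mul_left_cancel hax] at ha
      · intro hx
        exact ⟨x, hx, rfl⟩
    rw [heq] at h
    exact h
  · exact folner_core F hne hfol A g
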